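/- Let F be an arbitrary field and f = ∑_{i=0}^d c_i x^i ∈ F[x] a polynomial whose formal derivative f′ is not the zero polynomial. Assume c_0 ≠ 0 and c_1 = c_2 = ⋯ = c_m = 0 for some m ≥ 0. Then f has at least m+1 distinct roots in an algebraic closure of F. -/
import Mathlib

open Polynomial

lemma sum_count_le_card {α : Type*} [DecidableEq α] (u : Finset α) (t : Multiset α) :
    ∑ a ∈ u, t.count a ≤ Multiset.card t := by
  have h1 : ∀ a ∈ u, t.count a = (t.filter (· ∈ u)).count a := by
    intro a ha
    rw [Multiset.count_filter, if_pos ha]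
  rw [Finset.sum_congr rfl h1]
  set t' := t.filter (· ∈ u) with ht'
  have hsub : t'.toFinset ⊆ u := by
    intro a ha
    rw [Multiset.mem_toFinset, ht', Multiset.mem_filter] at ha
    exact ha.2
  calc ∑ a ∈ u, t'.count a = ∑ a ∈ t'.toFinset, t'.count a := by
        refine (Finset.sum_subset hsub ?_).symm
        intro a _ ha
        rw [Multiset.count_eq_zero]
        exact fun h => ha (Multiset.mem_toFinset.2 h)
    _ = Multiset.card t' := Multiset.toFinset_sum_count_eq t'
    _ ≤ Multiset.card t := Multiset.card_le_card (Multiset.filter_le _ t)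

open scoped Classical in
/-- Let `F` be a field and `f ∈ F[x]` a polynomial with nonzero formal derivative,
nonzero constant term, and vanishing coefficients in degrees `1, …, m`. Then `f`
has at least `m + 1` distinct roots in an algebraic closure of `F`. -/
theorem stmt2 (F : Type*) [Field F] (f : Polynomial F) (m : ℕ)
    (hf' : Polynomial.derivative f ≠ 0)
    (h0 : f.coeff 0 ≠ 0)
    (hc : ∀ i : ℕ, 1 ≤ i → i ≤ m → f.coeff i = 0) :
    m + 1 ≤ (f.map (algebraMap F (AlgebraicClosure F))).roots.toFinset.card := by
  set K := AlgebraicClosure F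
  set φ := algebraMap F K
  set g := f.map φ with hg
  have hf : f ≠ 0 := fun h => h0 (by simp [h])
  have hg0 : g ≠ 0 := Polynomial.map_ne_zero hf
  have hg' : derivative g ≠ 0 := by
    rw [hg, Polynomial.derivative_map]
    exact Polynomial.map_ne_zero hf'
  set s := g.roots.toFinset with hs
  set k := s.card
  -- 0 is not a root of g
  have h0g : (0 : K) ∉ s := by
    intro h
    rw [hs, Multiset.mem_toFinset, Polynomial.mem_roots hg0] at h
    have : g.coeff 0 ≠ 0 := by
      rw [hg, Polynomial.coeff_map]
      exact fun hz => h0 ((_root_.map_eq_zero φ).mp hz)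
    rw [Polynomial.coeff_zero_eq_eval_zero] at this
    exact this h
  -- X^m divides g'
  have hXm : (X : K[X]) ^ m ∣ derivative g := by
    rw [Polynomial.X_pow_dvd_iff]
    intro d hd
    rw [Polynomial.coeff_derivative, hg, Polynomial.coeff_map,
      hc (d + 1) (Nat.le_add_left 1 d) (by omega), map_zero, zero_mul]
  have hm0 : m ≤ (derivative g).roots.count 0 := by
    rw [Polynomial.count_roots, Polynomial.le_rootMultiplicity_iff hg']
    simpa using hXm
  -- multiplicities drop by at most 1
  have hdrop : ∀ r ∈ s, g.roots.count r ≤ (derivative g).roots.count r + 1 := by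
    intro r _
    rw [Polynomial.count_roots, Polynomial.count_roots]
    have := Polynomial.rootMultiplicity_sub_one_le_derivative_rootMultiplicity_of_ne_zero g r hg'
    omega
  -- g splits: card of roots = natDegree
  have hD : Multiset.card g.roots = g.natDegree := by
    rw [← Polynomial.splits_iff_card_roots]
    exact IsAlgClosed.splits g
  have hDsum : ∑ r ∈ s, g.roots.count r = g.natDegree := by
    rw [← hD, hs]
    exact Multiset.toFinset_sum_count_eq g.roots
  have hcount1 : ∀ r ∈ s, 1 ≤ g.roots.count r := by
    intro r hr
    rw [hs, Multiset.mem_toFinset] at hr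
    exact Multiset.one_le_count_iff_mem.2 hr
  -- key sums
  set A := ∑ r ∈ s, (derivative g).roots.count r with hA
  have hAk : g.natDegree ≤ A + k := by
    rw [← hDsum, hA]
    calc ∑ r ∈ s, g.roots.count r ≤ ∑ r ∈ s, ((derivative g).roots.count r + 1) :=
          Finset.sum_le_sum hdrop
      _ = A + k := by rw [Finset.sum_add_distrib, Finset.sum_const, smul_eq_mul, mul_one]
  have hcard : m + A ≤ Multiset.card (derivative g).roots := by
    calc m + A ≤ (derivative g).roots.count 0 + A := by omega
      _ = ∑ r ∈ insert 0 s, (derivative g).roots.count r := by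
          rw [Finset.sum_insert h0g]
      _ ≤ Multiset.card (derivative g).roots := sum_count_le_card _ _
  have hdeg' : Multiset.card (derivative g).roots ≤ (derivative g).natDegree :=
    Polynomial.card_roots' _
  have hlt : (derivative g).natDegree < g.natDegree := by
    apply Polynomial.natDegree_derivative_lt
    intro h
    exact hg' (Polynomial.derivative_of_natDegree_zero h)
  omega
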